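/- Let p be a prime, d a natural number coprime to p, c an integer with gcd(c, d·p) = 1, and R a normed commutative ring that is a ℚ_p-algebra whose norm is non-Archimedean (‖∑ i, f i‖ ≤ ⨆ i, ‖f i‖ for finite sums). There exists K > 0 such that for every locally constant function f : ZMod d × ℤ_[p] → R, the eventual value L(f) of the eventually constant sequence n ↦ ∑_{a ∈ ZMod(d·p^n)} f(a) • (algebraMap ℚ_[p] R)(E_c(n, a)) satisfies ‖L(f)‖ ≤ K · ‖f‖, where ‖f‖ = sup_{x} ‖f(x)‖. In particular, K can be taken to be 1 + ‖(c : R)‖ + ‖((c−1)/2 : R)‖. -/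

import Mathlib

open scoped BigOperators

/-- The Bernoulli distribution `E_c`. -/
def bernoulliDistribution (p d : ℕ) (c : ℤ) (n : ℕ) (a : ZMod (d * p ^ n)) : ℚ :=
  Int.fract ((a.val : ℚ) / (d * p ^ (n + 1))) -
    c * Int.fract ((a.val : ℚ) / (c * (d * p ^ (n + 1)))) + (c - 1) / 2
/-- The element of `ZMod d × ℤ_[p]` associated to `a : ZMod (d * p ^ n)` via the
Chinese remainder isomorphism and the canonical lift of representatives. -/
noncomputable def zmodPair (p : ℕ) [Fact p.Prime] {d : ℕ} (hd : d.Coprime p) (n : ℕ)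
    (a : ZMod (d * p ^ n)) : ZMod d × ℤ_[p] :=
  ((ZMod.chineseRemainder (hd.pow_right n) a).1,
    (((ZMod.chineseRemainder (hd.pow_right n) a).2).val : ℤ_[p]))

lemma norm_mul_intCast_le {R : Type*} [NormedCommRing R]
    (na : ∀ (ι : Type) [Fintype ι] (f : ι → R), ‖∑ i : ι, f i‖ ≤ ⨆ i : ι, ‖f i‖)
    (y : R) (k : ℤ) : ‖y * (k : R)‖ ≤ ‖y‖ := by
  have key : ∀ m : ℕ, ‖y * (m : R)‖ ≤ ‖y‖ := by
    intro m
    have h1 : y * (m : R) = ∑ _i : Fin m, y := by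
      simp [Finset.sum_const, nsmul_eq_mul, mul_comm]
    rw [h1]
    exact (na (Fin m) (fun _ => y)).trans
      (Real.iSup_le (fun _ => le_rfl) (norm_nonneg y))
  obtain ⟨m, rfl | rfl⟩ := k.eq_nat_or_neg
  · exact_mod_cast key m
  · rw [Int.cast_neg, mul_neg, norm_neg]; exact_mod_cast key m

lemma bernoulliDistribution_eq {p d : ℕ} {c : ℤ} (hc : c ≠ 0) (n : ℕ) (a : ZMod (d * p ^ n)) :
    bernoulliDistribution p d c n a =
      ((c * ⌊(a.val : ℚ) / (d * p ^ (n + 1)) / c⌋ -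
          ⌊(a.val : ℚ) / (d * p ^ (n + 1))⌋ : ℤ) : ℚ) + ((c : ℚ) - 1) / 2 := by
  have hc' : (c : ℚ) ≠ 0 := Int.cast_ne_zero.mpr hc
  unfold bernoulliDistribution
  have h : (a.val : ℚ) / (c * (d * p ^ (n + 1))) = (a.val : ℚ) / (d * p ^ (n + 1)) / c := by
    rw [div_div]; ring
  rw [h, Int.fract, Int.fract, mul_sub, mul_div_cancel₀ _ hc']
  push_cast
  ring

/-- The Bernoulli measure is bounded : there is a constant `K > 0`, which can be taken to
be `1 + ‖c‖ + ‖(c - 1) / 2‖`, such that the eventual value of the sequence of Riemann sums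
of any locally constant function `f` against the Bernoulli distribution has norm at most
`K * ‖f‖`. -/
theorem bernoulliDistribution_measure_bounded {p : ℕ} [Fact p.Prime] {d : ℕ}
    (hd : d.Coprime p) {c : ℤ} (hc : Int.gcd c (d * p) = 1) {R : Type*}
    [NormedCommRing R] [Algebra ℚ_[p] R]
    (na : ∀ (ι : Type) [Fintype ι] (f : ι → R), ‖∑ i : ι, f i‖ ≤ ⨆ i : ι, ‖f i‖) :
    haveI : NeZero d :=
      ⟨by rintro rfl; exact (Fact.out : p.Prime).ne_one ((Nat.coprime_zero_left p).mp hd)⟩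
    ∃ K : ℝ, 0 < K ∧
      K = 1 + ‖((c : ℤ) : R)‖ + ‖(algebraMap ℚ_[p] R) (((c : ℚ_[p]) - 1) / 2)‖ ∧
      ∀ (f : LocallyConstant (ZMod d × ℤ_[p]) R) (L : R),
        (∀ᶠ n in Filter.atTop,
          (∑ a : ZMod (d * p ^ n), f (zmodPair p hd n a) •
            (algebraMap ℚ_[p] R) (bernoulliDistribution p d c n a)) = L) →
        ‖L‖ ≤ K * ‖f.toContinuousMap‖ := by
  haveI : NeZero d :=
    ⟨by rintro rfl; exact (Fact.out : p.Prime).ne_one ((Nat.coprime_zero_left p).mp hd)⟩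
  have hc0 : c ≠ 0 := by
    rintro rfl
    have h1 : d * p = 1 := by simpa [Int.gcd, Int.natAbs_mul] using hc
    exact (Fact.out : p.Prime).ne_one (Nat.eq_one_of_mul_eq_one_left h1)
  refine ⟨_, ?_, rfl, ?_⟩
  · positivity
  · intro f L hL
    obtain ⟨n, hn⟩ := hL.exists
    rw [← hn]
    refine (na (ZMod (d * p ^ n)) _).trans (Real.iSup_le (fun a => ?_) (by positivity))
    set x := zmodPair p hd n a with hx
    set X := (a.val : ℚ) / (d * p ^ (n + 1)) with hX
    set q : R := (algebraMap ℚ_[p] R) (((c : ℚ_[p]) - 1) / 2) with hq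
    have hcast : (((bernoulliDistribution p d c n a : ℚ)) : ℚ_[p]) =
        ((⌊X / c⌋ : ℤ) : ℚ_[p]) * (c : ℚ_[p]) - ((⌊X⌋ : ℤ) : ℚ_[p]) +
          ((c : ℚ_[p]) - 1) / 2 := by
      rw [bernoulliDistribution_eq hc0 n a]
      push_cast
      ring
    have hterm : f x • (algebraMap ℚ_[p] R) (bernoulliDistribution p d c n a) =
        f x * (c : R) * ((⌊X / c⌋ : ℤ) : R) - f x * ((⌊X⌋ : ℤ) : R) + f x * q := by
      rw [smul_eq_mul, hcast, map_add, map_sub, map_mul, map_intCast, map_intCast,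
        map_intCast, hq]
      ring
    have hfx : ‖f x‖ ≤ ‖f.toContinuousMap‖ := f.toContinuousMap.norm_coe_le_norm x
    have hA : ‖f x * (c : R) * ((⌊X / c⌋ : ℤ) : R)‖ ≤ ‖((c : ℤ) : R)‖ * ‖f.toContinuousMap‖ := by
      refine (norm_mul_intCast_le na _ _).trans ((norm_mul_le _ _).trans ?_)
      rw [mul_comm]
      exact mul_le_mul_of_nonneg_left hfx (norm_nonneg _)
    have hB : ‖f x * ((⌊X⌋ : ℤ) : R)‖ ≤ ‖f.toContinuousMap‖ :=
      (norm_mul_intCast_le na _ _).trans hfx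
    have hC : ‖f x * q‖ ≤ ‖q‖ * ‖f.toContinuousMap‖ := by
      refine (norm_mul_le _ _).trans ?_
      rw [mul_comm]
      exact mul_le_mul_of_nonneg_left hfx (norm_nonneg _)
    rw [hterm]
    calc ‖f x * (c : R) * ((⌊X / c⌋ : ℤ) : R) - f x * ((⌊X⌋ : ℤ) : R) + f x * q‖
        ≤ ‖f x * (c : R) * ((⌊X / c⌋ : ℤ) : R) - f x * ((⌊X⌋ : ℤ) : R)‖ + ‖f x * q‖ :=
          norm_add_le _ _
      _ ≤ ‖f x * (c : R) * ((⌊X / c⌋ : ℤ) : R)‖ + ‖f x * ((⌊X⌋ : ℤ) : R)‖ + ‖f x * q‖ :=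
          add_le_add (norm_sub_le _ _) le_rfl
      _ ≤ ‖((c : ℤ) : R)‖ * ‖f.toContinuousMap‖ + ‖f.toContinuousMap‖ +
            ‖q‖ * ‖f.toContinuousMap‖ := add_le_add (add_le_add hA hB) hC
      _ = (1 + ‖((c : ℤ) : R)‖ + ‖q‖) * ‖f.toContinuousMap‖ := by ring
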